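/- For z = (z₁,z₂) ∈ ℝ², define the two-option softmax σ₁(z) = exp(z₁)/(exp(z₁)+exp(z₂)), σ₂(z) = exp(z₂)/(exp(z₁)+exp(z₂)). Fix real game values V^i_{ℓp} for i,ℓ,p ∈ {1,2} and define the opinion-weighted value functions V̂^i(z¹,z²) = Σ_{ℓ,p∈{1,2}} σ_ℓ(z¹)·σ_p(z²)·V^i_{ℓp} on ℝ²×ℝ². Fix nominal opinions z̄¹, z̄² ∈ ℝ², and set φ_b(z)=σ₁(z)σ₂(z), φ_a(z)=(σ₁(z)−σ₂(z))·φ_b(z), a₁=φ_a(z̄¹)·[σ₁(z̄²)(V¹₁₁−V¹₂₁)+σ₂(z̄²)(V¹₁₂−V¹₂₂)], a₂=φ_a(z̄²)·[σ₁(z̄¹)(V²₁₁−V²₁₂)+σ₂(z̄¹)(V²₂₁−V²₂₂)], b_i=φ_b(z̄¹)·φ_b(z̄²)·(−V^i₁₁−V^i₂₂+V^i₁₂+V^i₂₁). Then the 4×4 matrix whose first two rows are the negatives of the second partial derivatives of V̂¹ with respect to (the components of z¹, then all of (z¹,z²)) and whose last two rows are the negatives of the second partial derivatives of V̂² with respect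 to (the components of z², then all of (z¹,z²)), all evaluated at (z̄¹,z̄²), equals the Kronecker product Γ⊗H₀ where Γ = [[a₁,b₁],[b₂,a₂]] and H₀ = [[1,−1],[−1,1]]. Explicitly: for j,q ∈ {1,2} and ℓ,p ∈ {1,2}, −∂²V̂¹/∂z¹_ℓ ∂z^j_p (z̄¹,z̄²) equals the ((1,ℓ),(j,p)) entry of Γ⊗H₀, and −∂²V̂²/∂z²_ℓ ∂z^j_p (z̄¹,z̄²) equals the ((2,ℓ),(j,p)) entry of Γ⊗H₀. -/

import Mathlib

open Kronecker

/-- Two-option softmax: `σ_ℓ(z) = exp(z_ℓ) / (exp(z₁) + exp(z₂))`. -/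
noncomputable def sm (z : Fin 2 → ℝ) (ℓ : Fin 2) : ℝ :=
  Real.exp (z ℓ) / (Real.exp (z 0) + Real.exp (z 1))

/-- `φ_b(z) = σ₁(z)·σ₂(z)`. -/
noncomputable def phib (z : Fin 2 → ℝ) : ℝ := sm z 0 * sm z 1

/-- `φ_a(z) = (σ₁(z) − σ₂(z))·φ_b(z)`. -/
noncomputable def phia (z : Fin 2 → ℝ) : ℝ := (sm z 0 - sm z 1) * phib z

/-- The opinion-weighted game value `V̂^i` of player `i`, as a function of the joint opinion
variable `w : Fin 2 × Fin 2 → ℝ`, where `w (j, p)` is the opinion of player `j` about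
option `p`: `V̂^i = Σ_{ℓ,p} σ_ℓ(z¹) σ_p(z²) V^i_{ℓp}`. -/
noncomputable def Vhat (V : Fin 2 → Fin 2 → Fin 2 → ℝ) (i : Fin 2)
    (w : Fin 2 × Fin 2 → ℝ) : ℝ :=
  ∑ ℓ : Fin 2, ∑ p : Fin 2, sm (fun o => w (0, o)) ℓ * sm (fun o => w (1, o)) p * V i ℓ p

/-- Partial derivative of `f` in the coordinate `k` (agent, option). -/
noncomputable def pder (k : Fin 2 × Fin 2) (f : (Fin 2 × Fin 2 → ℝ) → ℝ)
    (w : Fin 2 × Fin 2 → ℝ) : ℝ :=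
  deriv (fun t => f (Function.update w k t)) (w k)


/-- First derivative of the softmax: `∂σ_ℓ/∂z_q = σ_ℓ (δ_{ℓq} − σ_q)`. -/
noncomputable def D (ℓ q : Fin 2) (z : Fin 2 → ℝ) : ℝ :=
  sm z ℓ * ((if ℓ = q then 1 else 0) - sm z q)

/-- Second derivative of the softmax. -/
noncomputable def DD (ℓ q q' : Fin 2) (z : Fin 2 → ℝ) : ℝ :=
  D ℓ q' z * ((if ℓ = q then 1 else 0) - sm z q) - sm z ℓ * D q q' z

lemma sm_hasDerivAt (z : Fin 2 → ℝ) (ℓ q : Fin 2) :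
    HasDerivAt (fun t => sm (Function.update z q t) ℓ) (D ℓ q z) (z q) := by
  fin_cases ℓ <;> fin_cases q <;>
    simp only [sm, D, Function.update, Fin.isValue] <;> norm_num
  · have h := (Real.hasDerivAt_exp (z 0)).fun_div
      ((Real.hasDerivAt_exp (z 0)).add_const (Real.exp (z 1))) (by positivity)
    refine h.congr_deriv ?_
    field_simp
  · have h := (hasDerivAt_const (z 1) (Real.exp (z 0))).fun_div
      ((Real.hasDerivAt_exp (z 1)).const_add (Real.exp (z 0))) (by positivity)
    refine h.congr_deriv ?_
    field_simp
    ring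
  · have h := (hasDerivAt_const (z 0) (Real.exp (z 1))).fun_div
      ((Real.hasDerivAt_exp (z 0)).add_const (Real.exp (z 1))) (by positivity)
    refine h.congr_deriv ?_
    field_simp
    ring
  · have h := (Real.hasDerivAt_exp (z 1)).fun_div
      ((Real.hasDerivAt_exp (z 1)).const_add (Real.exp (z 0))) (by positivity)
    refine h.congr_deriv ?_
    field_simp

lemma upd00 (w : Fin 2 × Fin 2 → ℝ) (q : Fin 2) (t : ℝ) :
    (fun o => Function.update w (0, q) t (0, o)) = Function.update (fun o => w (0, o)) q t := by
  funext o; by_cases h : o = q <;> simp [Function.update, h]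

lemma upd01 (w : Fin 2 × Fin 2 → ℝ) (q : Fin 2) (t : ℝ) :
    (fun o => Function.update w (0, q) t (1, o)) = (fun o => w (1, o)) := by
  funext o; simp [Function.update]

lemma upd10 (w : Fin 2 × Fin 2 → ℝ) (q : Fin 2) (t : ℝ) :
    (fun o => Function.update w (1, q) t (0, o)) = (fun o => w (0, o)) := by
  funext o; simp [Function.update]

lemma upd11 (w : Fin 2 × Fin 2 → ℝ) (q : Fin 2) (t : ℝ) :
    (fun o => Function.update w (1, q) t (1, o)) = Function.update (fun o => w (1, o)) q t := by
  funext o; by_cases h : o = q <;> simp [Function.update, h]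

lemma pder_Vhat_fst (V : Fin 2 → Fin 2 → Fin 2 → ℝ) (i q : Fin 2) (w : Fin 2 × Fin 2 → ℝ) :
    pder (0, q) (Vhat V i) w =
      ∑ ℓ : Fin 2, ∑ p : Fin 2,
        D ℓ q (fun o => w (0, o)) * sm (fun o => w (1, o)) p * V i ℓ p := by
  unfold pder Vhat
  simp only [upd00, upd01]
  have h : HasDerivAt
      (fun t => ∑ ℓ : Fin 2, ∑ p : Fin 2,
        sm (Function.update (fun o => w (0, o)) q t) ℓ * sm (fun o => w (1, o)) p * V i ℓ p)
      (∑ ℓ : Fin 2, ∑ p : Fin 2,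
        D ℓ q (fun o => w (0, o)) * sm (fun o => w (1, o)) p * V i ℓ p)
      ((fun o => w (0, o)) q) := by
    apply HasDerivAt.fun_sum; intro ℓ _
    apply HasDerivAt.fun_sum; intro p _
    exact ((sm_hasDerivAt _ ℓ q).mul_const _).mul_const _
  exact h.deriv

lemma pder_Vhat_snd (V : Fin 2 → Fin 2 → Fin 2 → ℝ) (i q : Fin 2) (w : Fin 2 × Fin 2 → ℝ) :
    pder (1, q) (Vhat V i) w =
      ∑ ℓ : Fin 2, ∑ p : Fin 2,
        sm (fun o => w (0, o)) ℓ * D p q (fun o => w (1, o)) * V i ℓ p := by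
  unfold pder Vhat
  simp only [upd10, upd11]
  have h : HasDerivAt
      (fun t => ∑ ℓ : Fin 2, ∑ p : Fin 2,
        sm (fun o => w (0, o)) ℓ * sm (Function.update (fun o => w (1, o)) q t) p * V i ℓ p)
      (∑ ℓ : Fin 2, ∑ p : Fin 2,
        sm (fun o => w (0, o)) ℓ * D p q (fun o => w (1, o)) * V i ℓ p)
      ((fun o => w (1, o)) q) := by
    apply HasDerivAt.fun_sum; intro ℓ _
    apply HasDerivAt.fun_sum; intro p _
    exact (((sm_hasDerivAt _ p q).const_mul _).mul_const _)
  exact h.deriv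

lemma D_hasDerivAt (z : Fin 2 → ℝ) (ℓ q q' : Fin 2) :
    HasDerivAt (fun t => D ℓ q (Function.update z q' t)) (DD ℓ q q' z) (z q') := by
  have h := (sm_hasDerivAt z ℓ q').fun_mul
    ((hasDerivAt_const (z q') ((if ℓ = q then (1:ℝ) else 0))).fun_sub (sm_hasDerivAt z q q'))
  rw [Function.update_eq_self] at h
  simp only [D, DD]
  refine h.congr_deriv ?_
  simp only [D]
  ring

lemma pder2_ff (V : Fin 2 → Fin 2 → Fin 2 → ℝ) (i q p : Fin 2) (w : Fin 2 × Fin 2 → ℝ) :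
    pder (0, p) (pder (0, q) (Vhat V i)) w =
      ∑ ℓ : Fin 2, ∑ p' : Fin 2,
        DD ℓ q p (fun o => w (0, o)) * sm (fun o => w (1, o)) p' * V i ℓ p' := by
  have hF : pder (0, q) (Vhat V i) = fun w => ∑ ℓ : Fin 2, ∑ p' : Fin 2,
      D ℓ q (fun o => w (0, o)) * sm (fun o => w (1, o)) p' * V i ℓ p' :=
    funext (pder_Vhat_fst V i q)
  rw [hF]; unfold pder
  simp only [upd00, upd01]
  have h : HasDerivAt
      (fun t => ∑ ℓ : Fin 2, ∑ p' : Fin 2,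
        D ℓ q (Function.update (fun o => w (0, o)) p t) * sm (fun o => w (1, o)) p' * V i ℓ p')
      (∑ ℓ : Fin 2, ∑ p' : Fin 2,
        DD ℓ q p (fun o => w (0, o)) * sm (fun o => w (1, o)) p' * V i ℓ p')
      ((fun o => w (0, o)) p) := by
    apply HasDerivAt.fun_sum; intro ℓ _
    apply HasDerivAt.fun_sum; intro p' _
    exact ((D_hasDerivAt _ ℓ q p).mul_const _).mul_const _
  exact h.deriv

lemma pder2_fs (V : Fin 2 → Fin 2 → Fin 2 → ℝ) (i q p : Fin 2) (w : Fin 2 × Fin 2 → ℝ) :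
    pder (1, p) (pder (0, q) (Vhat V i)) w =
      ∑ ℓ : Fin 2, ∑ p' : Fin 2,
        D ℓ q (fun o => w (0, o)) * D p' p (fun o => w (1, o)) * V i ℓ p' := by
  have hF : pder (0, q) (Vhat V i) = fun w => ∑ ℓ : Fin 2, ∑ p' : Fin 2,
      D ℓ q (fun o => w (0, o)) * sm (fun o => w (1, o)) p' * V i ℓ p' :=
    funext (pder_Vhat_fst V i q)
  rw [hF]; unfold pder
  simp only [upd10, upd11]
  have h : HasDerivAt
      (fun t => ∑ ℓ : Fin 2, ∑ p' : Fin 2,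
        D ℓ q (fun o => w (0, o)) * sm (Function.update (fun o => w (1, o)) p t) p' * V i ℓ p')
      (∑ ℓ : Fin 2, ∑ p' : Fin 2,
        D ℓ q (fun o => w (0, o)) * D p' p (fun o => w (1, o)) * V i ℓ p')
      ((fun o => w (1, o)) p) := by
    apply HasDerivAt.fun_sum; intro ℓ _
    apply HasDerivAt.fun_sum; intro p' _
    exact (((sm_hasDerivAt _ p' p).const_mul _).mul_const _)
  exact h.deriv

lemma pder2_sf (V : Fin 2 → Fin 2 → Fin 2 → ℝ) (i q p : Fin 2) (w : Fin 2 × Fin 2 → ℝ) :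
    pder (0, p) (pder (1, q) (Vhat V i)) w =
      ∑ ℓ : Fin 2, ∑ p' : Fin 2,
        D ℓ p (fun o => w (0, o)) * D p' q (fun o => w (1, o)) * V i ℓ p' := by
  have hF : pder (1, q) (Vhat V i) = fun w => ∑ ℓ : Fin 2, ∑ p' : Fin 2,
      sm (fun o => w (0, o)) ℓ * D p' q (fun o => w (1, o)) * V i ℓ p' :=
    funext (pder_Vhat_snd V i q)
  rw [hF]; unfold pder
  simp only [upd00, upd01]
  have h : HasDerivAt
      (fun t => ∑ ℓ : Fin 2, ∑ p' : Fin 2,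
        sm (Function.update (fun o => w (0, o)) p t) ℓ * D p' q (fun o => w (1, o)) * V i ℓ p')
      (∑ ℓ : Fin 2, ∑ p' : Fin 2,
        D ℓ p (fun o => w (0, o)) * D p' q (fun o => w (1, o)) * V i ℓ p')
      ((fun o => w (0, o)) p) := by
    apply HasDerivAt.fun_sum; intro ℓ _
    apply HasDerivAt.fun_sum; intro p' _
    exact ((sm_hasDerivAt _ ℓ p).mul_const _).mul_const _
  exact h.deriv

lemma pder2_ss (V : Fin 2 → Fin 2 → Fin 2 → ℝ) (i q p : Fin 2) (w : Fin 2 × Fin 2 → ℝ) :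
    pder (1, p) (pder (1, q) (Vhat V i)) w =
      ∑ ℓ : Fin 2, ∑ p' : Fin 2,
        sm (fun o => w (0, o)) ℓ * DD p' q p (fun o => w (1, o)) * V i ℓ p' := by
  have hF : pder (1, q) (Vhat V i) = fun w => ∑ ℓ : Fin 2, ∑ p' : Fin 2,
      sm (fun o => w (0, o)) ℓ * D p' q (fun o => w (1, o)) * V i ℓ p' :=
    funext (pder_Vhat_snd V i q)
  rw [hF]; unfold pder
  simp only [upd10, upd11]
  have h : HasDerivAt
      (fun t => ∑ ℓ : Fin 2, ∑ p' : Fin 2,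
        sm (fun o => w (0, o)) ℓ * D p' q (Function.update (fun o => w (1, o)) p t) * V i ℓ p')
      (∑ ℓ : Fin 2, ∑ p' : Fin 2,
        sm (fun o => w (0, o)) ℓ * DD p' q p (fun o => w (1, o)) * V i ℓ p')
      ((fun o => w (1, o)) p) := by
    apply HasDerivAt.fun_sum; intro ℓ _
    apply HasDerivAt.fun_sum; intro p' _
    exact (((D_hasDerivAt _ p' q p).const_mul _).mul_const _)
  exact h.deriv

lemma sm_sum (z : Fin 2 → ℝ) : sm z 0 + sm z 1 = 1 := by
  unfold sm
  rw [← add_div]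
  exact div_self (by positivity)

/-- Lemma 3 (entrywise): the matrix of negated second partial derivatives of the
opinion-weighted game values, evaluated at the nominal opinions `(z̄¹, z̄²)`, equals
`Γ ⊗ H₀` with `Γ = [[a₁,b₁],[b₂,a₂]]` and `H₀ = [[1,−1],[−1,1]]`. -/
theorem hessian_eq_kronecker (V : Fin 2 → Fin 2 → Fin 2 → ℝ) (z1 z2 : Fin 2 → ℝ)
    (a₁ a₂ b₁ b₂ : ℝ)
    (ha₁ : a₁ = phia z1 * (sm z2 0 * (V 0 0 0 - V 0 1 0) + sm z2 1 * (V 0 0 1 - V 0 1 1)))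
    (ha₂ : a₂ = phia z2 * (sm z1 0 * (V 1 0 0 - V 1 0 1) + sm z1 1 * (V 1 1 0 - V 1 1 1)))
    (hb₁ : b₁ = phib z1 * phib z2 * (-(V 0 0 0) - V 0 1 1 + V 0 0 1 + V 0 1 0))
    (hb₂ : b₂ = phib z1 * phib z2 * (-(V 1 0 0) - V 1 1 1 + V 1 0 1 + V 1 1 0))
    (wbar : Fin 2 × Fin 2 → ℝ)
    (hw : wbar = fun k => if k.1 = 0 then z1 k.2 else z2 k.2) :
    (Matrix.of fun r c : Fin 2 × Fin 2 => - pder c (pder r (Vhat V r.1)) wbar) =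
      !![a₁, b₁; b₂, a₂] ⊗ₖ !![(1 : ℝ), -1; -1, 1] := by
  have hz1 : (fun o => wbar (0, o)) = z1 := by subst hw; funext o; simp
  have hz2 : (fun o => wbar (1, o)) = z2 := by subst hw; funext o; simp
  have e1 : sm z1 1 = 1 - sm z1 0 := by have := sm_sum z1; linarith
  have e2 : sm z2 1 = 1 - sm z2 0 := by have := sm_sum z2; linarith
  subst ha₁ ha₂ hb₁ hb₂
  ext ⟨i, ℓ⟩ ⟨j, p⟩
  fin_cases i <;> fin_cases ℓ <;> fin_cases j <;> fin_cases p <;>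
    simp only [Fin.mk_zero, Fin.mk_one, Matrix.of_apply, Matrix.kroneckerMap_apply,
      pder2_ff, pder2_fs, pder2_sf, pder2_ss, hz1, hz2] <;>
    simp [Fin.sum_univ_two, DD, D, phia, phib, Matrix.cons_val_zero, Matrix.cons_val_one] <;>
    rw [e1, e2] <;> ring
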